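/- In the one-point compactification of ω₁ × ω₂, every compact subset K of ω₁ × ω₂ is contained in a product α × β for some α < ω₁ and β < ω₂; consequently the point at infinity ⋆ is a p-point: countable intersections of neighbourhoods of ⋆ are again neighbourhoods of ⋆. -/

import Mathlib

open Filter Topology Set

universe u v

/-- `x` has a neighbourhood base in the subspace `S` well-ordered by reverse inclusion. -/
def HasWONhdsBase {X : Type u} [TopologicalSpace X] (x : X) (S : Set X) : Prop :=
  ∃ (o : Ordinal.{u}) (B : ↥(Set.Iio o) → Set X),
    (∀ i, B i ⊆ S) ∧ (∀ i j, i ≤ j → B j ⊆ B i) ∧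
    (𝓝[S] x).HasBasis (fun _ => True) B

/-- `X` is radial at `x`. -/
def RadialAt (X : Type u) [TopologicalSpace X] (x : X) : Prop :=
  ∀ A : Set X, x ∈ closure A →
    ∃ (o : Ordinal.{u}) (f : ↥(Set.Iio o) → X), o ≠ 0 ∧
      (∀ i, f i ∈ A) ∧ Filter.Tendsto f Filter.atTop (𝓝 x)
noncomputable def om1 : Ordinal.{0} := (Cardinal.aleph 1).ord
noncomputable def om2 : Ordinal.{0} := (Cardinal.aleph 2).ord

lemma aux_lim {o : Ordinal} (ho : Order.IsSuccLimit o) {K : Set ↥(Set.Iio o)}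
    (hK : IsCompact K) : ∃ a : ↥(Set.Iio o), ∀ x ∈ K, x < a := by
  have : Nonempty ↥(Set.Iio o) := ⟨⟨0, ho.pos⟩⟩
  obtain ⟨u, hu⟩ := hK.bddAbove
  refine ⟨⟨u.1 + 1, ho.succ_lt u.2⟩, fun x hx => ?_⟩
  exact lt_of_le_of_lt (hu hx) (by exact_mod_cast Order.lt_succ u.1)

lemma aux_compact_Iic {o : Ordinal} (a : ↥(Set.Iio o)) : IsCompact (Set.Iic a) := by
  rw [Subtype.isCompact_iff]
  have : Subtype.val '' (Set.Iic a) = Set.Icc 0 a.1 := by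
    ext x
    constructor
    · rintro ⟨y, hy, rfl⟩; exact ⟨zero_le (a := y.1), hy⟩
    · rintro ⟨-, hx⟩; exact ⟨⟨x, lt_of_le_of_lt hx a.2⟩, hx, rfl⟩
  rw [this]
  exact isCompact_Icc

theorem stmt6 :
    (∀ K : Set (↥(Set.Iio om1) × ↥(Set.Iio om2)), IsCompact K →
      ∃ (a : ↥(Set.Iio om1)) (b : ↥(Set.Iio om2)), ∀ p ∈ K, p.1 < a ∧ p.2 < b) ∧
    (∀ f : ℕ → Set (OnePoint (↥(Set.Iio om1) × ↥(Set.Iio om2))),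
      (∀ n, f n ∈ 𝓝 (OnePoint.infty : OnePoint (↥(Set.Iio om1) × ↥(Set.Iio om2)))) →
      (⋂ n, f n) ∈ 𝓝 (OnePoint.infty : OnePoint (↥(Set.Iio om1) × ↥(Set.Iio om2)))) := by
  have hlim1 : Order.IsSuccLimit om1 := Cardinal.isSuccLimit_ord (Cardinal.aleph0_le_aleph 1)
  have hlim2 : Order.IsSuccLimit om2 := Cardinal.isSuccLimit_ord (Cardinal.aleph0_le_aleph 2)
  have part1 : ∀ K : Set (↥(Set.Iio om1) × ↥(Set.Iio om2)), IsCompact K →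
      ∃ (a : ↥(Set.Iio om1)) (b : ↥(Set.Iio om2)), ∀ p ∈ K, p.1 < a ∧ p.2 < b := by
    intro K hK
    obtain ⟨a, ha⟩ := aux_lim hlim1 (hK.image continuous_fst)
    obtain ⟨b, hb⟩ := aux_lim hlim2 (hK.image continuous_snd)
    exact ⟨a, b, fun p hp => ⟨ha _ (Set.mem_image_of_mem _ hp),
      hb _ (Set.mem_image_of_mem _ hp)⟩⟩
  refine ⟨part1, fun f hf => ?_⟩
  choose Kn hKn hsub using fun n => (OnePoint.hasBasis_nhds_infty.mem_iff.1 (hf n))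
  choose a b hab using fun n => part1 (Kn n) (hKn n).2
  have hcof1 : Cardinal.mk ℕ < om1.cof := by
    rw [show om1.cof = Cardinal.aleph 1 from Cardinal.isRegular_aleph_one.cof_eq,
      Cardinal.mk_nat]
    exact Cardinal.aleph0_lt_aleph_one
  have hreg2 : Cardinal.IsRegular (Cardinal.aleph 2) := by
    have h := Cardinal.isRegular_aleph_succ 1
    rwa [show Order.succ (1 : Ordinal) = 2 by
      rw [← Ordinal.add_one_eq_succ, one_add_one_eq_two]] at h
  have hcof2 : Cardinal.mk ℕ < om2.cof := by
    rw [show om2.cof = Cardinal.aleph 2 from hreg2.cof_eq, Cardinal.mk_nat]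
    exact Cardinal.aleph0_lt_aleph_one.trans_le (Cardinal.aleph_le_aleph.2 one_le_two)
  have hA : (⨆ n, ((a n : Ordinal))) < om1 :=
    Ordinal.iSup_lt_ord hcof1 (fun n => (a n).2)
  have hB : (⨆ n, ((b n : Ordinal))) < om2 :=
    Ordinal.iSup_lt_ord hcof2 (fun n => (b n).2)
  set aS : ↥(Set.Iio om1) := ⟨_, hA⟩
  set bS : ↥(Set.Iio om2) := ⟨_, hB⟩
  rw [OnePoint.hasBasis_nhds_infty.mem_iff]
  refine ⟨Set.Iic aS ×ˢ Set.Iic bS,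
    ⟨isClosed_Iic.prod isClosed_Iic, (aux_compact_Iic aS).prod (aux_compact_Iic bS)⟩, ?_⟩
  intro y hy
  simp only [Set.mem_iInter]
  intro n
  apply hsub n
  rcases hy with hy | hy
  · obtain ⟨x, hx, rfl⟩ := hy
    left
    refine ⟨x, fun hxK => hx ?_, rfl⟩
    obtain ⟨h1', h2'⟩ := hab n x hxK
    constructor
    · have : (x.1 : Ordinal) ≤ ⨆ n, ((a n : Ordinal)) :=
        le_trans (le_of_lt h1') (Ordinal.le_iSup _ n)
      exact this
    · have : (x.2 : Ordinal) ≤ ⨆ n, ((b n : Ordinal)) :=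
        le_trans (le_of_lt h2') (Ordinal.le_iSup _ n)
      exact this
  · right; exact hy
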